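/- Let 0 < β < 1, σ > 0, γ > 0, π ≥ 0, δ* > 0, ρ > 0 with ρ < δ* < ρ + δ*σ, and c₀, k₀, z₀ > 0. Set ξ := (δ*+π(1−β))/β − (δ*−ρ)/σ, z̄ := ((δ*+π)/(βγ))^{1/(1−β)}, K := k₀/(c₀z₀^{(β−σ)/σ}), z(t) := z̄z₀/[(z̄^{1−β}−z₀^{1−β})e^{−((1−β)(δ*+π)/β)t}+z₀^{1−β}]^{1/(1−β)}, F(t) := ∫₀ᵗ z(s)^{(σ−β)/σ}e^{−ξ s} ds, c(t) := c₀z₀^{β/σ}e^{−((ρ−δ*)/σ)t}z(t)^{−β/σ}, k(t) := (K−F(t))c₀z₀^{β/σ}z(t)^{−1}e^{((δ*+π−πβ)/β)t}. Assume K − F(t) > 0 for all t ≥ 0 and lim_{t→∞} F(t) = K. Then c(t)/k(t) tends to ξ as t → ∞. -/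

import Mathlib

open Filter

/-- Along the second closed-form solution of the transformed Lucas-Uzawa model,
the consumption-to-capital ratio c(t)/k(t) converges to its
balanced-growth-path value ξ. -/
theorem ck_tendsto_xi (β σ γ pi δs ρ c0 k0 z0 : ℝ)
    (hβ0 : 0 < β) (hβ1 : β < 1) (hσ : 0 < σ) (hγ : 0 < γ)
    (hpi : 0 ≤ pi) (hδs : 0 < δs) (hρ : 0 < ρ) (hρδ : ρ < δs)
    (hδρ : δs < ρ + δs * σ)
    (hc0 : 0 < c0) (hk0 : 0 < k0) (hz0 : 0 < z0)
    (ξ zbar K : ℝ)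
    (hξ : ξ = (δs + pi * (1 - β)) / β - (δs - ρ) / σ)
    (hzbar : zbar = ((δs + pi) / (β * γ)) ^ (1 / (1 - β)))
    (hK : K = k0 / (c0 * z0 ^ ((β - σ) / σ)))
    (z F c k : ℝ → ℝ)
    (hz : ∀ t, z t = zbar * z0 /
      ((zbar ^ (1 - β) - z0 ^ (1 - β)) * Real.exp (-((1 - β) * (δs + pi) / β) * t)
        + z0 ^ (1 - β)) ^ (1 / (1 - β)))
    (hF : ∀ t, F t = ∫ s in (0:ℝ)..t, z s ^ ((σ - β) / σ) * Real.exp (-ξ * s))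
    (hc : ∀ t, c t = c0 * z0 ^ (β / σ) * Real.exp (-((ρ - δs) / σ) * t)
      * z t ^ (-(β / σ)))
    (hk : ∀ t, k t = (K - F t) * c0 * z0 ^ (β / σ) * z t ^ (-(1:ℝ))
      * Real.exp ((δs + pi - pi * β) / β * t))
    (hKF : ∀ t ≥ (0:ℝ), 0 < K - F t)
    (hFlim : Tendsto F atTop (nhds K)) :
    Tendsto (fun t => c t / k t) atTop (nhds ξ) := by
  have hβ1' : (0:ℝ) < 1 - β := by linarith
  have hδpi : (0:ℝ) < δs + pi := by linarith
  have hzbar0 : 0 < zbar := by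
    rw [hzbar]; exact Real.rpow_pos_of_pos (div_pos hδpi (by positivity)) _
  set a : ℝ := (1 - β) * (δs + pi) / β with ha
  have ha0 : 0 < a := div_pos (mul_pos hβ1' hδpi) hβ0
  set A : ℝ := zbar ^ (1 - β) - z0 ^ (1 - β) with hA
  set D : ℝ → ℝ := fun t => A * Real.exp (-a * t) + z0 ^ (1 - β) with hDdef
  have hz0p : 0 < z0 ^ (1 - β) := Real.rpow_pos_of_pos hz0 _
  have hzbp : 0 < zbar ^ (1 - β) := Real.rpow_pos_of_pos hzbar0 _
  have hDpos : ∀ t ∈ Set.Ici (0:ℝ), 0 < D t := by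
    intro t ht
    have he1 : Real.exp (-a * t) ≤ 1 := by
      rw [Real.exp_le_one_iff]
      have : 0 ≤ a * t := mul_nonneg ha0.le ht
      linarith
    have he0 : 0 < Real.exp (-a * t) := Real.exp_pos _
    simp only [hDdef, hA]
    nlinarith [mul_pos hzbp he0, mul_nonneg hz0p.le (sub_nonneg.2 he1)]
  have hDcont : Continuous D := by fun_prop
  -- z rewritten with D
  have hzD : ∀ t, z t = zbar * z0 / D t ^ (1 / (1 - β)) := hz
  have hzpos : ∀ t ∈ Set.Ici (0:ℝ), 0 < z t := by
    intro t ht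
    rw [hzD t]
    exact div_pos (mul_pos hzbar0 hz0) (Real.rpow_pos_of_pos (hDpos t ht) _)
  have hzcont : ContinuousOn z (Set.Ici 0) := by
    have : ContinuousOn (fun t => zbar * z0 / D t ^ (1 / (1 - β))) (Set.Ici 0) := by
      refine continuousOn_const.div
        (hDcont.continuousOn.rpow_const fun x hx => Or.inl (hDpos x hx).ne') ?_
      exact fun x hx => (Real.rpow_pos_of_pos (hDpos x hx) _).ne'
    exact this.congr fun t _ => hzD t
  set q : ℝ := (σ - β) / σ with hq
  set u : ℝ → ℝ := fun t => z t ^ q with hu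
  set L : ℝ := zbar ^ q with hL
  have hLpos : 0 < L := Real.rpow_pos_of_pos hzbar0 _
  have hucont : ContinuousOn u (Set.Ici 0) :=
    hzcont.rpow_const fun x hx => Or.inl (hzpos x hx).ne'
  set h : ℝ → ℝ := fun t => u t * Real.exp (-ξ * t) with hh
  have hhcont : ContinuousOn h (Set.Ici 0) :=
    hucont.mul (Real.continuous_exp.comp (by fun_prop)).continuousOn
  have hhpos : ∀ t ∈ Set.Ici (0:ℝ), 0 < h t := fun t ht =>
    mul_pos (Real.rpow_pos_of_pos (hzpos t ht) _) (Real.exp_pos _)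
  -- positivity of ξ
  have hξ0 : 0 < ξ := by
    have h1 : (δs - ρ) / σ < δs := (div_lt_iff₀ hσ).2 (by nlinarith)
    have h2 : δs < (δs + pi * (1 - β)) / β := by
      rw [lt_div_iff₀ hβ0]
      nlinarith [mul_nonneg hpi hβ1'.le]
    rw [hξ]; linarith
  -- limit of z
  have hexp_lim : Tendsto (fun t : ℝ => Real.exp (-a * t)) atTop (nhds 0) := by
    have h1 : Tendsto (fun t : ℝ => -a * t) atTop atBot :=
      tendsto_id.const_mul_atTop_of_neg (by linarith)
    exact Real.tendsto_exp_atBot.comp h1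
  have hDlim : Tendsto D atTop (nhds (z0 ^ (1 - β))) := by
    have h1 : Tendsto (fun t : ℝ => A * Real.exp (-a * t) + z0 ^ (1 - β)) atTop
        (nhds (A * 0 + z0 ^ (1 - β))) :=
      ((hexp_lim.const_mul A).add tendsto_const_nhds)
    rw [mul_zero, zero_add] at h1
    exact h1
  have hz0pow : (z0 ^ (1 - β)) ^ (1 / (1 - β)) = z0 := by
    rw [← Real.rpow_mul hz0.le, mul_one_div, div_self hβ1'.ne', Real.rpow_one]
  have hzlim : Tendsto z atTop (nhds zbar) := by
    have hden : Tendsto (fun t => D t ^ (1 / (1 - β))) atTop (nhds z0) := by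
      have := hDlim.rpow_const (p := 1 / (1 - β)) (Or.inl hz0p.ne')
      rwa [hz0pow] at this
    have : Tendsto (fun t => zbar * z0 / D t ^ (1 / (1 - β))) atTop (nhds (zbar * z0 / z0)) :=
      tendsto_const_nhds.div hden hz0.ne'
    rw [mul_div_assoc, div_self hz0.ne', mul_one] at this
    exact this.congr fun t => (hzD t).symm
  have hulim : Tendsto u atTop (nhds L) := hzlim.rpow_const (Or.inl hzbar0.ne')
  -- derivative of F on (0, ∞)
  have hFderiv : ∀ b : ℝ, 0 < b → HasDerivAt F (h b) b := by
    intro b hb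
    have hFeq : F = fun t => ∫ s in (0:ℝ)..t, h s := funext hF
    have hIci : Set.Ici (0:ℝ) ∈ nhds b :=
      Filter.mem_of_superset (isOpen_Ioi.mem_nhds hb) Set.Ioi_subset_Ici_self
    have hint : IntervalIntegrable h MeasureTheory.volume 0 b := by
      apply ContinuousOn.intervalIntegrable
      apply hhcont.mono
      rw [Set.uIcc_of_le hb.le]
      exact Set.Icc_subset_Ici_self
    have hmeas : StronglyMeasurableAtFilter h (nhds b) MeasureTheory.volume :=
      (hhcont.mono Set.Ioi_subset_Ici_self).stronglyMeasurableAtFilter isOpen_Ioi b hb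
    have hca : ContinuousAt h b := hhcont.continuousAt hIci
    rw [hFeq]
    exact intervalIntegral.integral_hasDerivAt_right hint hmeas hca
  -- L'Hopital
  have hLhop : Tendsto (fun t => Real.exp (-ξ * t) / (K - F t)) atTop (nhds (ξ / L)) := by
    apply HasDerivAt.lhopital_zero_atTop
      (f' := fun t => Real.exp (-ξ * t) * (-ξ)) (g' := fun t => -h t)
    · filter_upwards with t
      exact (((hasDerivAt_id t).const_mul (-ξ)).congr_deriv (mul_one _)).exp
    · filter_upwards [eventually_gt_atTop (0:ℝ)] with t ht
      have := (hasDerivAt_const t K).sub (hFderiv t ht)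
      rw [zero_sub] at this
      exact this
    · filter_upwards [eventually_gt_atTop (0:ℝ)] with t ht
      exact neg_ne_zero.2 (hhpos t ht.le).ne'
    · have h1 : Tendsto (fun t : ℝ => -ξ * t) atTop atBot :=
        tendsto_id.const_mul_atTop_of_neg (by linarith)
      exact Real.tendsto_exp_atBot.comp h1
    · have h1 : Tendsto (fun t => K - F t) atTop (nhds (K - K)) :=
        tendsto_const_nhds.sub hFlim
      simpa using h1
    · have heq : ∀ᶠ t in atTop,
          ξ / u t = Real.exp (-ξ * t) * (-ξ) / (-h t) := by
        filter_upwards [eventually_gt_atTop (0:ℝ)] with t ht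
        have h2 : u t ≠ 0 := (Real.rpow_pos_of_pos (hzpos t ht.le) _).ne'
        rw [show h t = u t * Real.exp (-ξ * t) from rfl]
        field_simp
      exact (tendsto_const_nhds.div hulim hLpos.ne').congr' heq
  have hfinal : Tendsto (fun t => u t * (Real.exp (-ξ * t) / (K - F t))) atTop (nhds ξ) := by
    have := hulim.mul hLhop
    rwa [mul_comm, div_mul_cancel₀ _ hLpos.ne'] at this
  refine hfinal.congr' ?_
  filter_upwards [eventually_gt_atTop (0:ℝ)] with t ht
  have hzt : 0 < z t := hzpos t ht.le
  have hKFt : 0 < K - F t := hKF t ht.le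
  have hz0pow2 : 0 < z0 ^ (β / σ) := Real.rpow_pos_of_pos hz0 _
  have hE : Real.exp (-((ρ - δs) / σ) * t)
      = Real.exp (-ξ * t) * Real.exp ((δs + pi - pi * β) / β * t) := by
    rw [← Real.exp_add]
    congr 1
    rw [hξ]
    field_simp
    ring
  have hzq : z t ^ (-(β / σ)) = z t ^ q * z t ^ (-(1:ℝ)) := by
    rw [← Real.rpow_add hzt]
    congr 1
    rw [hq]
    field_simp
    ring
  rw [hu]
  rw [hc, hk, hE, hzq]
  have hzpow1 : z t ^ (-(1:ℝ)) ≠ 0 := (Real.rpow_pos_of_pos hzt _).ne'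
  field_simp
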